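/- Let z0 ∈ (−1,0) ∪ (0,1) be a nonzero real point of the unit disc D. Then V_𝒰(z0) ∪ {0} equals the closed real segment with endpoints 0 and z0. -/

import Mathlib

open Complex Set Filter Topology

noncomputable section

/-- The open unit disc. -/
def uDisc : Set ℂ := {z : ℂ | ‖z‖ < 1}

/-- The holomorphic branch of the square root with `√1 = 1` (principal branch). -/
def csqrt (z : ℂ) : ℂ := z ^ (1/2 : ℂ)

/-- `f` has only real Taylor coefficients at `0`, expressed by the symmetry
`f(conj z) = conj (f z)` on the unit disc. -/
def RealCoeffs (f : ℂ → ℂ) : Prop :=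
  ∀ z ∈ uDisc, f ((starRingEnd ℂ) z) = (starRingEnd ℂ) (f z)

/-- The class `𝒰` of univalent self-maps of the unit disc with `f(0) = 0`,
`f'(0) > 0` and real Taylor coefficients. -/
def ClassU (f : ℂ → ℂ) : Prop :=
  DifferentiableOn ℂ f uDisc ∧ InjOn f uDisc ∧ MapsTo f uDisc uDisc ∧
    f 0 = 0 ∧ 0 < (deriv f 0).re ∧ (deriv f 0).im = 0 ∧ RealCoeffs f

/-- The value range `V_𝒰(z0)`. -/
def VU (z0 : ℂ) : Set ℂ := {w : ℂ | ∃ f : ℂ → ℂ, ClassU f ∧ f z0 = w}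

lemma uDisc_eq : uDisc = Metric.ball (0 : ℂ) 1 := by
  ext z; simp [uDisc, Metric.mem_ball, Complex.dist_eq]

lemma real_mem_uDisc {x : ℝ} (h1 : -1 < x) (h2 : x < 1) : (x : ℂ) ∈ uDisc := by
  simp only [uDisc, mem_setOf_eq, Complex.norm_real, Real.norm_eq_abs]
  exact abs_lt.2 ⟨h1, h2⟩

lemma im_eq_zero_of_realCoeffs {f : ℂ → ℂ} (hf : RealCoeffs f) {x : ℝ}
    (hx : (x : ℂ) ∈ uDisc) : (f x).im = 0 := by
  have := hf x hx
  rw [Complex.conj_ofReal] at this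
  have : f x = (starRingEnd ℂ) (f x) := this
  have := congrArg Complex.im this
  simp at this
  linarith

theorem valueRange_ClassU_real (z0 : ℝ) (h1 : -1 < z0) (h2 : z0 < 1) (h0 : z0 ≠ 0) :
    VU (z0 : ℂ) ∪ {0} = segment ℝ (0 : ℂ) (z0 : ℂ) := by
  have hz0 : (z0 : ℂ) ∈ uDisc := real_mem_uDisc h1 h2
  have h0' : (0 : ℂ) ∈ uDisc := by simp [uDisc]
  have hopen : IsOpen uDisc := by rw [uDisc_eq]; exact Metric.isOpen_ball
  apply Set.Subset.antisymm
  · rintro w (⟨f, ⟨hdiff, hinj, hmaps, hf0, hd1, hd2, hrc⟩, hfw⟩ | hw)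
    · -- hard direction
      -- f z0 is real
      have him : (f z0).im = 0 := im_eq_zero_of_realCoeffs hrc hz0
      set r : ℝ := (f z0).re with hr
      have hfz0 : f z0 = (r : ℂ) := by
        apply Complex.ext <;> simp [hr, him]
      -- Schwarz lemma
      have hschwarz : ‖f z0‖ ≤ ‖(z0 : ℂ)‖ := by
        apply Complex.norm_le_norm_of_mapsTo_ball
        · rwa [← uDisc_eq]
        · rw [← uDisc_eq]; exact hmaps.mono_right (by rw [uDisc_eq]; exact Metric.ball_subset_closedBall)
        · exact hf0
        · simpa using abs_lt.2 ⟨h1, h2⟩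
      have habs : |r| ≤ |z0| := by
        rwa [hfz0, Complex.norm_real, Complex.norm_real, Real.norm_eq_abs, Real.norm_eq_abs] at hschwarz
      -- the real restriction g
      set g : ℝ → ℝ := fun x => (f x).re with hg
      have hmem : ∀ x ∈ Ioo (-1 : ℝ) 1, (x : ℂ) ∈ uDisc := fun x hx =>
        real_mem_uDisc hx.1 hx.2
      have hfx : ∀ x ∈ Ioo (-1 : ℝ) 1, f x = ((g x : ℝ) : ℂ) := by
        intro x hx
        apply Complex.ext
        · simp [hg]
        · simp [im_eq_zero_of_realCoeffs hrc (hmem x hx)]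
      have hginj : InjOn g (Ioo (-1) 1) := by
        intro x hx y hy hxy
        have : f x = f y := by rw [hfx x hx, hfx y hy, hxy]
        exact_mod_cast hinj (hmem x hx) (hmem y hy) this
      have hgcont : ContinuousOn g (Ioo (-1) 1) := by
        apply Complex.continuous_re.comp_continuousOn
        exact hdiff.continuousOn.comp Complex.continuous_ofReal.continuousOn hmem
      -- g has positive derivative at 0
      have hfda : HasDerivAt f (deriv f 0) 0 :=
        (hdiff.differentiableAt (hopen.mem_nhds h0')).hasDerivAt
      have hfda' : HasDerivAt f (deriv f 0) ((0 : ℝ) : ℂ) := by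
        rwa [Complex.ofReal_zero]
      have hgda : HasDerivAt g (deriv f 0).re 0 := hfda'.real_of_complex
      have hg0 : g 0 = 0 := by simp [hg, Complex.ofReal_zero, hf0]
      -- from the derivative: there is x ∈ (0,1) with g x > 0
      have hexists : ∃ x ∈ Ioo (0 : ℝ) 1, 0 < g x := by
        have hslope : Tendsto (slope g 0) (𝓝[≠] 0) (𝓝 ((deriv f 0).re)) :=
          hasDerivAt_iff_tendsto_slope.mp hgda
        have hev : ∀ᶠ x in 𝓝[≠] (0 : ℝ), 0 < slope g 0 x :=
          hslope.eventually (eventually_gt_nhds hd1)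
        have hle : 𝓝[>] (0 : ℝ) ≤ 𝓝[≠] (0 : ℝ) :=
          nhdsWithin_mono _ fun x hx => ne_of_gt hx
        have hIoo : Ioo (0 : ℝ) 1 ∈ 𝓝[>] (0 : ℝ) :=
          Ioo_mem_nhdsGT_of_mem ⟨le_refl _, one_pos⟩
        obtain ⟨x, hx1, hx2⟩ := ((hev.filter_mono hle).and
          (eventually_mem_set.mpr hIoo)).exists
        refine ⟨x, hx2, ?_⟩
        have := hx1
        rw [slope_def_field, hg0, sub_zero, sub_zero] at this
        have hxpos : 0 < x := hx2.1
        have := mul_pos this hxpos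
        rwa [div_mul_cancel₀] at this
        exact ne_of_gt hxpos
      obtain ⟨x, hxI, hxpos⟩ := hexists
      have hxIoo : x ∈ Ioo (-1 : ℝ) 1 := ⟨by linarith [hxI.1], hxI.2⟩
      have h0Ioo : (0 : ℝ) ∈ Ioo (-1 : ℝ) 1 := by constructor <;> norm_num
      have hz0Ioo : z0 ∈ Ioo (-1 : ℝ) 1 := ⟨h1, h2⟩
      -- g is strictly monotone
      have hmono : StrictMonoOn g (Ioo (-1) 1) := by
        rcases ContinuousOn.strictMonoOn_of_injOn_Ioo (by norm_num) hgcont hginj with h | h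
        · exact h
        · exfalso
          have := h h0Ioo hxIoo hxI.1
          rw [hg0] at this
          linarith
      have hrg : r = g z0 := by simp [hg, hr]
      -- r has the sign of z0
      have hsign : 0 < r / z0 := by
        rcases lt_or_gt_of_ne h0 with hneg | hpos
        · have : g z0 < g 0 := hmono hz0Ioo h0Ioo hneg
          rw [hg0] at this
          exact div_pos_of_neg_of_neg (by rw [hrg]; linarith) hneg
        · have : g 0 < g z0 := hmono h0Ioo hz0Ioo hpos
          rw [hg0] at this
          exact div_pos (by rw [hrg]; linarith) hpos
      have hle1 : r / z0 ≤ 1 := by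
        have : |r / z0| ≤ 1 := by
          rw [abs_div]
          exact div_le_one_of_le₀ habs (abs_nonneg _)
        calc r / z0 ≤ |r / z0| := le_abs_self _
          _ ≤ 1 := this
      rw [segment_eq_image]
      refine ⟨r / z0, ⟨le_of_lt hsign, hle1⟩, ?_⟩
      show (1 - r / z0) • (0 : ℂ) + (r / z0) • ((z0 : ℝ) : ℂ) = w
      have : (r / z0) • ((z0 : ℝ) : ℂ) = ((r : ℝ) : ℂ) := by
        rw [Complex.real_smul, ← Complex.ofReal_mul, div_mul_cancel₀ _ h0]
      rw [smul_zero, zero_add, this, ← hfz0, hfw]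
    · rw [mem_singleton_iff] at hw
      rw [hw]
      exact left_mem_segment ℝ (0 : ℂ) (z0 : ℂ)
  · -- easy direction
    intro w hw
    rw [segment_eq_image] at hw
    obtain ⟨θ, ⟨hθ0, hθ1⟩, hθw⟩ := hw
    simp only [smul_zero, zero_add] at hθw
    rcases eq_or_lt_of_le hθ0 with hθz | hθpos
    · right
      simp [← hθw, ← hθz]
    · left
      refine ⟨fun z => (θ : ℂ) * z, ⟨?_, ?_, ?_, ?_, ?_, ?_, ?_⟩, ?_⟩
      · exact (differentiable_id.const_mul (θ:ℂ)).differentiableOn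
      · intro a _ b _ hab
        have hθne : (θ : ℂ) ≠ 0 := by exact_mod_cast ne_of_gt hθpos
        exact mul_left_cancel₀ hθne hab
      · intro z hz
        simp only [uDisc, mem_setOf_eq, norm_mul, Complex.norm_real, Real.norm_eq_abs] at hz ⊢
        calc |θ| * ‖z‖ ≤ 1 * ‖z‖ := by
              apply mul_le_mul_of_nonneg_right _ (norm_nonneg z)
              rw [abs_of_pos hθpos]; exact hθ1
          _ = ‖z‖ := one_mul _
          _ < 1 := hz
      · exact mul_zero _
      · have : deriv (fun z : ℂ => (θ : ℂ) * z) 0 = (θ : ℂ) := by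
          simpa using ((hasDerivAt_id (0 : ℂ)).const_mul (θ : ℂ)).deriv
        rw [this]; simpa using hθpos
      · have : deriv (fun z : ℂ => (θ : ℂ) * z) 0 = (θ : ℂ) := by
          simpa using ((hasDerivAt_id (0 : ℂ)).const_mul (θ : ℂ)).deriv
        rw [this]; simp
      · intro z _
        simp [map_mul, Complex.conj_ofReal]
      · rw [← hθw, Complex.real_smul]
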